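/- Let m ≥ 1 and q ≥ 0, and let Λ = AddCircle ((m : ℝ)) × Δ, where Δ = {t : Fin (q+1) → ℝ : t_j ≥ 0 for all j and t_0 + … + t_q = 1} is the standard q-simplex. Define τ : Λ → Λ by τ(r̄, (t_0, …, t_q)) = (r̄ − t̄_q, (t_q, t_0, …, t_{q−1})). Then τ is well defined and a homeomorphism, its (q+1)-fold iterate satisfies τ^{q+1}(r̄, t) = (r̄ − 1̄, t), and consequently τ^{m(q+1)} is the identity of Λ. -/

import Mathlib

open Set

namespace Stmt13

/-- The ambient twist map `τ(r̄, t) = (r̄ − t̄_q, (t_q, t_0, …, t_{q−1}))` on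
`AddCircle m × (Fin (q+1) → ℝ)`. -/
noncomputable def tauMap (m q : ℕ) :
    AddCircle (m : ℝ) × (Fin (q + 1) → ℝ) → AddCircle (m : ℝ) × (Fin (q + 1) → ℝ) :=
  fun p => (p.1 - ((p.2 (Fin.last q) : ℝ) : AddCircle (m : ℝ)), fun j => p.2 (j - 1))

/-- `Λ = AddCircle m × Δ_q`, where `Δ_q` is the standard `q`-simplex. -/
def Lam (m q : ℕ) : Set (AddCircle (m : ℝ) × (Fin (q + 1) → ℝ)) :=
  {p | (∀ j, 0 ≤ p.2 j) ∧ ∑ j, p.2 j = 1}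

noncomputable def invMap (m q : ℕ) :
    AddCircle (m : ℝ) × (Fin (q + 1) → ℝ) → AddCircle (m : ℝ) × (Fin (q + 1) → ℝ) :=
  fun p => (p.1 + ((p.2 0 : ℝ) : AddCircle (m : ℝ)), fun j => p.2 (j + 1))

open Fin.NatCast Fin.CommRing

lemma neg_one_fin (q : ℕ) : (-1 : Fin (q + 1)) = Fin.last q := by
  rw [← Fin.natCast_eq_last]
  have h : ((q : Fin (q + 1)) + 1) = 0 := by
    have h2 : ((q : Fin (q + 1)) + 1) = (((q + 1 : ℕ)) : Fin (q + 1)) := by push_cast; ring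
    rw [h2, Fin.natCast_self]
  exact (eq_neg_of_add_eq_zero_left h).symm

lemma tau_leftInv (m q : ℕ) : ∀ p, invMap m q (tauMap m q p) = p := by
  intro p
  simp only [invMap, tauMap]
  ext
  · simp [zero_sub, neg_one_fin]
  · simp

lemma tau_rightInv (m q : ℕ) : ∀ p, tauMap m q (invMap m q p) = p := by
  intro p
  simp only [invMap, tauMap]
  ext
  · simp
  · simp

lemma cont_tau (m q : ℕ) : Continuous (tauMap m q) := by
  refine Continuous.prodMk ?_ ?_
  · exact continuous_fst.sub (continuous_quotient_mk'.comp ((continuous_apply _).comp continuous_snd))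
  · exact continuous_pi fun j => (continuous_apply _).comp continuous_snd

lemma cont_inv (m q : ℕ) : Continuous (invMap m q) := by
  refine Continuous.prodMk ?_ ?_
  · exact continuous_fst.add (continuous_quotient_mk'.comp ((continuous_apply _).comp continuous_snd))
  · exact continuous_pi fun j => (continuous_apply _).comp continuous_snd

lemma mapsTo_tau (m q : ℕ) : Set.MapsTo (tauMap m q) (Lam m q) (Lam m q) := by
  rintro p ⟨h1, h2⟩
  refine ⟨fun j => h1 _, ?_⟩
  calc ∑ j, p.2 (j - 1) = ∑ j, p.2 j := Equiv.sum_comp (Equiv.subRight (1 : Fin (q+1))) p.2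
  _ = 1 := h2

lemma mapsTo_inv (m q : ℕ) : Set.MapsTo (invMap m q) (Lam m q) (Lam m q) := by
  rintro p ⟨h1, h2⟩
  refine ⟨fun j => h1 _, ?_⟩
  calc ∑ j, p.2 (j + 1) = ∑ j, p.2 j := Equiv.sum_comp (Equiv.addRight (1 : Fin (q+1))) p.2
  _ = 1 := h2

lemma iter_formula (m q k : ℕ) (p : AddCircle (m : ℝ) × (Fin (q + 1) → ℝ)) :
    (tauMap m q)^[k] p =
      (p.1 - ∑ i ∈ Finset.range k, ((p.2 (Fin.last q - (i : Fin (q+1))) : ℝ) : AddCircle (m : ℝ)),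
        fun j => p.2 (j - (k : Fin (q+1)))) := by
  induction k with
  | zero => simp
  | succ k ih =>
    rw [Function.iterate_succ_apply', ih]
    simp only [tauMap, Finset.sum_range_succ]
    ext
    · simp [sub_sub]
    · simp only
      rename_i j
      have h : j - 1 - (k : Fin (q + 1)) = j - ((k + 1 : ℕ) : Fin (q + 1)) := by
        push_cast
        ring
      rw [h]

lemma iter_q1 (m q : ℕ) : ∀ p ∈ Lam m q,
    (tauMap m q)^[q + 1] p = (p.1 - ((1 : ℝ) : AddCircle (m : ℝ)), p.2) := by
  rintro p ⟨h1, h2⟩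
  rw [iter_formula]
  ext
  · simp only
    congr 1
    have : ∑ i ∈ Finset.range (q+1), ((p.2 (Fin.last q - (i : Fin (q+1))) : ℝ) : AddCircle (m : ℝ))
        = ∑ i : Fin (q+1), ((p.2 (Fin.last q - i) : ℝ) : AddCircle (m : ℝ)) := by
      rw [← Fin.sum_univ_eq_sum_range]
      simp
    rw [this]
    have : ∑ i : Fin (q+1), ((p.2 (Fin.last q - i) : ℝ) : AddCircle (m : ℝ))
        = ∑ i : Fin (q+1), ((p.2 i : ℝ) : AddCircle (m : ℝ)) :=
      Equiv.sum_comp (Equiv.subLeft (Fin.last q)) (fun i => ((p.2 i : ℝ) : AddCircle (m : ℝ)))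
    rw [this, ← h2]
    exact (map_sum (QuotientAddGroup.mk' (AddSubgroup.zmultiples (m : ℝ))) p.2 Finset.univ).symm
  · simp

lemma iter_mul (m q : ℕ) : ∀ n : ℕ, ∀ p ∈ Lam m q,
    (tauMap m q)^[n * (q + 1)] p = (p.1 - n • ((1 : ℝ) : AddCircle (m : ℝ)), p.2) := by
  intro n
  induction n with
  | zero => intro p _; simp
  | succ n ih =>
    intro p hp
    have h : (n + 1) * (q + 1) = (q + 1) + n * (q + 1) := by ring
    rw [h, Function.iterate_add_apply, ih p hp]
    have hp' : ((p.1 - n • ((1 : ℝ) : AddCircle (m : ℝ)), p.2) : _ × _) ∈ Lam m q := hp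
    rw [iter_q1 m q _ hp']
    ext
    · simp only
      rw [succ_nsmul]
      abel
    · rfl

theorem stmt_13 (m q : ℕ) (hm : 1 ≤ m) :
    Set.MapsTo (tauMap m q) (Lam m q) (Lam m q) ∧
    (∃ e : ↥(Lam m q) ≃ₜ ↥(Lam m q), ∀ p : ↥(Lam m q), (e p).val = tauMap m q p.val) ∧
    (∀ p ∈ Lam m q,
      (tauMap m q)^[q + 1] p = (p.1 - ((1 : ℝ) : AddCircle (m : ℝ)), p.2)) ∧
    (∀ p ∈ Lam m q, (tauMap m q)^[m * (q + 1)] p = p) := by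
  refine ⟨mapsTo_tau m q, ?_, iter_q1 m q, ?_⟩
  · refine ⟨⟨⟨fun p => ⟨tauMap m q p, mapsTo_tau m q p.2⟩,
      fun p => ⟨invMap m q p, mapsTo_inv m q p.2⟩, ?_, ?_⟩, ?_, ?_⟩, fun p => rfl⟩
    · intro p; exact Subtype.ext (tau_leftInv m q p)
    · intro p; exact Subtype.ext (tau_rightInv m q p)
    · exact Continuous.subtype_mk ((cont_tau m q).comp continuous_subtype_val) _
    · exact Continuous.subtype_mk ((cont_inv m q).comp continuous_subtype_val) _
  · intro p hp
    rw [iter_mul m q m p hp]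
    have : m • ((1 : ℝ) : AddCircle (m : ℝ)) = 0 := by
      rw [← AddCircle.coe_nsmul, nsmul_eq_mul, mul_one, AddCircle.coe_period]
    rw [this, sub_zero]

end Stmt13
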